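/- Let d ≥ 1 be an integer, σ > 0, ω ∈ ℝ and λ ∈ ℝ. Let u : ℝ^d → ℝ be of class C² with u ∈ L²(ℝ^d), |∇u| ∈ L²(ℝ^d), Δu ∈ L²(ℝ^d), 0 < ∫_{ℝ^d} |u|^{2σ+2} dx < ∞, and ∫_{ℝ^d} u² dx > 0. If −Δu(x) + ω u(x) − μ[u] |u(x)|^{2σ} u(x) − (λ/4) (∫_{ℝ^d} |u|^{2σ+2} dx)^{1/(σ+1)} u(x) = 0 for every x ∈ ℝ^d, then λ = 0. -/

import Mathlib

open MeasureTheory Set Filter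

set_option maxHeartbeats 1000000

noncomputable section

/-- Laplacian as the sum of second directional derivatives along the standard basis. -/
def lapl {d : ℕ} (w : EuclideanSpace ℝ (Fin d) → ℝ) (x : EuclideanSpace ℝ (Fin d)) : ℝ :=
  ∑ i : Fin d, fderiv ℝ (fun y => fderiv ℝ w y (EuclideanSpace.single i 1)) x
    (EuclideanSpace.single i 1)

/-- The nonlocal coefficient `μ[w]` on the whole space `ℝ^d`. -/
def muR (d : ℕ) (σ ω : ℝ) (w : EuclideanSpace ℝ (Fin d) → ℝ) : ℝ :=
  ((∫ x, ‖fderiv ℝ w x‖ ^ 2) + ω * ∫ x, (w x) ^ 2) / ∫ x, |w x| ^ (2 * σ + 2)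

/-- The functional `F[w]` on the whole space `ℝ^d`. -/
def FR (d : ℕ) (σ ω : ℝ) (w : EuclideanSpace ℝ (Fin d) → ℝ) : ℝ :=
  ((∫ x, ‖fderiv ℝ w x‖ ^ 2) + ω * ∫ x, (w x) ^ 2) /
    (∫ x, |w x| ^ (2 * σ + 2)) ^ (1 / (σ + 1))

lemma opnorm_sq_eq {d : ℕ} (L : EuclideanSpace ℝ (Fin d) →L[ℝ] ℝ) :
    ‖L‖ ^ 2 = ∑ i : Fin d, (L (EuclideanSpace.single i 1)) ^ 2 := by
  set E := EuclideanSpace ℝ (Fin d)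
  set v : E := (InnerProductSpace.toDual ℝ E).symm L with hv
  have hLw : ∀ w : E, L w = inner ℝ v w := fun w =>
    (InnerProductSpace.toDual_symm_apply (𝕜 := ℝ)).symm
  have hnorm : ‖L‖ = ‖v‖ := by rw [hv, LinearIsometryEquiv.norm_map]
  rw [hnorm]
  have h1 : ∀ i : Fin d, L (EuclideanSpace.single i 1) = v i := by
    intro i; rw [hLw, EuclideanSpace.inner_single_right]; simp
  have h2 : ‖v‖ ^ 2 = ∑ i : Fin d, (v i) ^ 2 := by
    rw [EuclideanSpace.norm_eq, Real.sq_sqrt (by positivity)]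
    simp [Real.norm_eq_abs, sq_abs]
  rw [h2]
  exact Finset.sum_congr rfl fun i _ => by rw [h1]

lemma abs_le_opnorm_single {d : ℕ} (L : EuclideanSpace ℝ (Fin d) →L[ℝ] ℝ) (i : Fin d) :
    |L (EuclideanSpace.single i 1)| ≤ ‖L‖ := by
  calc |L (EuclideanSpace.single i 1)| ≤ ‖L‖ * ‖EuclideanSpace.single i (1:ℝ)‖ := L.le_opNorm _
    _ = ‖L‖ := by rw [EuclideanSpace.norm_single]; simp

lemma integral_mul_lapl {d : ℕ} (u : EuclideanSpace ℝ (Fin d) → ℝ) (hC2 : ContDiff ℝ 2 u)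
    (hL2 : Integrable (fun x => (u x) ^ 2))
    (hG : Integrable (fun x => ‖fderiv ℝ u x‖ ^ 2))
    (hLap : Integrable (fun x => (lapl u x) ^ 2)) :
    ∫ x, u x * lapl u x = - ∫ x, ‖fderiv ℝ u x‖ ^ 2 := by
  classical
  -- basic abbreviations
  set e : Fin d → EuclideanSpace ℝ (Fin d) := fun i => EuclideanSpace.single i 1 with he
  set D1 : Fin d → EuclideanSpace ℝ (Fin d) → ℝ := fun i x => fderiv ℝ u x (e i) with hD1
  set D2 : Fin d → EuclideanSpace ℝ (Fin d) → ℝ :=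
    fun i x => fderiv ℝ (fun y => fderiv ℝ u y (e i)) x (e i) with hD2
  have hlapl : ∀ x, lapl u x = ∑ i, D2 i x := fun x => rfl
  -- regularity facts
  have hucont : Continuous u := hC2.continuous
  have hudiff : Differentiable ℝ u := hC2.differentiable (by norm_num)
  have hfd1 : ContDiff ℝ 1 (fderiv ℝ u) := hC2.fderiv_right (le_refl _)
  have hfdcont : Continuous (fderiv ℝ u) := hfd1.continuous
  have hD1c1 : ∀ i, ContDiff ℝ 1 (D1 i) := fun i => hfd1.clm_apply contDiff_const
  have hD1cont : ∀ i, Continuous (D1 i) := fun i => (hD1c1 i).continuous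
  have hD1diff : ∀ i, Differentiable ℝ (D1 i) := fun i => (hD1c1 i).differentiable one_ne_zero
  have hD2cont : ∀ i, Continuous (D2 i) := by
    intro i
    exact ((hD1c1 i).continuous_fderiv one_ne_zero).clm_apply continuous_const
  have hlaplcont : Continuous (lapl u) := by
    have : Continuous fun x => ∑ i, D2 i x := continuous_finset_sum _ fun i _ => hD2cont i
    exact this
  have hD1le : ∀ i x, |D1 i x| ≤ ‖fderiv ℝ u x‖ := fun i x => abs_le_opnorm_single _ i
  -- the bump function
  let θ : ContDiffBump (0 : EuclideanSpace ℝ (Fin d)) := ⟨1, 2, one_pos, one_lt_two⟩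
  obtain ⟨M, hM0, hM⟩ : ∃ M : ℝ, 0 ≤ M ∧
      ∀ y, ‖fderiv ℝ (θ : EuclideanSpace ℝ (Fin d) → ℝ) y‖ ≤ M := by
    have hcs : HasCompactSupport (fderiv ℝ (θ : EuclideanSpace ℝ (Fin d) → ℝ)) :=
      θ.hasCompactSupport.fderiv (𝕜 := ℝ)
    have hcont : Continuous (fderiv ℝ (θ : EuclideanSpace ℝ (Fin d) → ℝ)) :=
      (θ.contDiff (n := 1)).continuous_fderiv (by norm_num)
    obtain ⟨M, hM⟩ := hcs.exists_bound_of_continuous hcont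
    exact ⟨max M 0, le_max_right _ _, fun y => le_trans (hM y) (le_max_left _ _)⟩
  set χ : ℕ → EuclideanSpace ℝ (Fin d) → ℝ :=
    fun n x => (θ : EuclideanSpace ℝ (Fin d) → ℝ) (((n:ℝ)+1)⁻¹ • x) with hχ
  have hn1 : ∀ n : ℕ, (0:ℝ) < (n:ℝ)+1 := fun n => by positivity
  have hχsm : ∀ n, ContDiff ℝ 1 (χ n) := fun n => θ.contDiff.comp (contDiff_const_smul _)
  have hχdiff : ∀ n, Differentiable ℝ (χ n) := fun n => (hχsm n).differentiable one_ne_zero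
  have hχcont : ∀ n, Continuous (χ n) := fun n => (hχsm n).continuous
  have hχcs : ∀ n, HasCompactSupport (χ n) := by
    intro n
    apply HasCompactSupport.intro (isCompact_closedBall (0 : EuclideanSpace ℝ (Fin d)) (2*((n:ℝ)+1)))
    intro x hx
    simp only [Metric.mem_closedBall, dist_zero_right, not_le] at hx
    apply θ.zero_of_le_dist
    show (2:ℝ) ≤ dist (((n:ℝ)+1)⁻¹ • x) 0
    rw [dist_zero_right, norm_smul, norm_inv, Real.norm_eq_abs, abs_of_pos (hn1 n),
      inv_mul_eq_div, le_div_iff₀ (hn1 n)]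
    linarith
  have hχ0 : ∀ n x, 0 ≤ χ n x := fun n x => θ.nonneg
  have hχle1 : ∀ n x, χ n x ≤ 1 := fun n x => θ.le_one
  have hχ1 : ∀ (n : ℕ) x, ‖x‖ ≤ (n:ℝ)+1 → χ n x = 1 := by
    intro n x hx
    apply θ.one_of_mem_closedBall
    show (((n:ℝ)+1)⁻¹ • x) ∈ Metric.closedBall (0 : EuclideanSpace ℝ (Fin d)) 1
    rw [Metric.mem_closedBall, dist_zero_right, norm_smul, norm_inv, Real.norm_eq_abs,
      abs_of_pos (hn1 n), inv_mul_eq_div, div_le_one (hn1 n)]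
    exact hx
  have hχd0 : ∀ (n : ℕ) x, ‖x‖ < (n:ℝ)+1 → fderiv ℝ (χ n) x = 0 := by
    intro n x hx
    have hop : IsOpen {y : EuclideanSpace ℝ (Fin d) | ‖y‖ < (n:ℝ)+1} :=
      isOpen_lt continuous_norm continuous_const
    have hev : χ n =ᶠ[nhds x] fun _ => (1:ℝ) := by
      filter_upwards [hop.mem_nhds hx] with y hy
      exact hχ1 n y (le_of_lt hy)
    rw [hev.fderiv_eq]
    exact fderiv_const_apply 1
  -- fderiv formula and bound for χ n
  have hχdform : ∀ (n : ℕ) x, fderiv ℝ (χ n) x =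
      (fderiv ℝ (θ : EuclideanSpace ℝ (Fin d) → ℝ) (((n:ℝ)+1)⁻¹ • x)).comp
        (((n:ℝ)+1)⁻¹ • ContinuousLinearMap.id ℝ (EuclideanSpace ℝ (Fin d))) := by
    intro n x
    set L : EuclideanSpace ℝ (Fin d) →L[ℝ] EuclideanSpace ℝ (Fin d) :=
      ((n:ℝ)+1)⁻¹ • ContinuousLinearMap.id ℝ (EuclideanSpace ℝ (Fin d)) with hLdef
    have h1 : χ n = (θ : EuclideanSpace ℝ (Fin d) → ℝ) ∘ L := rfl
    have hθd : DifferentiableAt ℝ (θ : EuclideanSpace ℝ (Fin d) → ℝ) (L x) :=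
      ((θ.contDiff (n := 1)).differentiable one_ne_zero).differentiableAt
    rw [h1, fderiv_comp x hθd L.differentiableAt, L.fderiv]
    have hLx : L x = ((n:ℝ)+1)⁻¹ • x := by simp [hLdef]
    rw [hLx]
  have hχdb : ∀ (n : ℕ) x (i : Fin d), |fderiv ℝ (χ n) x (e i)| ≤ M := by
    intro n x i
    rw [hχdform n x]
    have h1 : ((fderiv ℝ (θ : EuclideanSpace ℝ (Fin d) → ℝ) (((n:ℝ)+1)⁻¹ • x)).comp
        (((n:ℝ)+1)⁻¹ • ContinuousLinearMap.id ℝ (EuclideanSpace ℝ (Fin d)))) (e i)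
        = ((n:ℝ)+1)⁻¹ * fderiv ℝ (θ : EuclideanSpace ℝ (Fin d) → ℝ) (((n:ℝ)+1)⁻¹ • x) (e i) := by
      simp [ContinuousLinearMap.comp_apply]
    rw [h1, abs_mul]
    have h2 : |fderiv ℝ (θ : EuclideanSpace ℝ (Fin d) → ℝ) (((n:ℝ)+1)⁻¹ • x) (e i)| ≤ M :=
      le_trans (abs_le_opnorm_single _ i) (hM _)
    have h3 : |(((n:ℝ)+1)⁻¹)| ≤ 1 := by
      rw [abs_of_pos (by positivity)]
      rw [inv_le_one_iff₀]; right; linarith [hn1 n]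
    nlinarith [abs_nonneg (fderiv ℝ (θ : EuclideanSpace ℝ (Fin d) → ℝ) (((n:ℝ)+1)⁻¹ • x) (e i)),
      abs_nonneg (((n:ℝ)+1)⁻¹)]
  have hχdcont : ∀ (n : ℕ), Continuous (fderiv ℝ (χ n)) := fun n =>
    (hχsm n).continuous_fderiv one_ne_zero
  have hχdicont : ∀ (n : ℕ) (i : Fin d), Continuous fun x => fderiv ℝ (χ n) x (e i) :=
    fun n i => (hχdcont n).clm_apply continuous_const
  have hχdics : ∀ (n : ℕ) (i : Fin d), HasCompactSupport fun x => fderiv ℝ (χ n) x (e i) := by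
    intro n i
    have h1 : HasCompactSupport (fderiv ℝ (χ n)) := (hχcs n).fderiv (𝕜 := ℝ)
    exact h1.comp_left (g := fun L : EuclideanSpace ℝ (Fin d) →L[ℝ] ℝ => L (e i)) rfl
  -- the key integration by parts identity for each n
  have key : ∀ n : ℕ,
      ∫ x, χ n x * (u x * lapl u x)
        = - (∫ x, χ n x * ∑ i, (D1 i x)^2)
          - ∫ x, ∑ i, fderiv ℝ (χ n) x (e i) * (u x * D1 i x) := by
    intro n
    have hpd : Differentiable ℝ (fun x => χ n x * u x) := (hχdiff n).mul hudiff
    have hfe : ∀ (i : Fin d) x, fderiv ℝ (fun y => χ n y * u y) x (e i)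
        = χ n x * D1 i x + u x * fderiv ℝ (χ n) x (e i) := by
      intro i x
      rw [fderiv_fun_mul ((hχdiff n) x) (hudiff x)]
      simp [smul_eq_mul]
      exact Or.inl rfl
    have int1 : ∀ i, Integrable (fun x => (χ n x * u x) * D2 i x) := fun i =>
      (((hχcont n).mul hucont).mul (hD2cont i)).integrable_of_hasCompactSupport
        (((hχcs n).mul_right).mul_right)
    have int2 : ∀ i, Integrable (fun x => χ n x * (D1 i x)^2) := fun i =>
      ((hχcont n).mul ((hD1cont i).pow 2)).integrable_of_hasCompactSupport
        ((hχcs n).mul_right)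
    have int3 : ∀ i, Integrable (fun x => fderiv ℝ (χ n) x (e i) * (u x * D1 i x)) := fun i =>
      ((hχdicont n i).mul (hucont.mul (hD1cont i))).integrable_of_hasCompactSupport
        ((hχdics n i).mul_right)
    have int4 : ∀ i, Integrable (fun x => (χ n x * u x) * D1 i x) := fun i =>
      (((hχcont n).mul hucont).mul (hD1cont i)).integrable_of_hasCompactSupport
        (((hχcs n).mul_right).mul_right)
    have int5 : ∀ i, Integrable
        (fun x => fderiv ℝ (fun y => χ n y * u y) x (e i) * D1 i x) := by
      intro i
      have base : Integrable
          (fun x => (χ n x * D1 i x + u x * fderiv ℝ (χ n) x (e i)) * D1 i x) := by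
        apply Continuous.integrable_of_hasCompactSupport
        · exact (((hχcont n).mul (hD1cont i)).add
            (hucont.mul (hχdicont n i))).mul (hD1cont i)
        · apply HasCompactSupport.mul_right
          exact ((hχcs n).mul_right).add ((hχdics n i).mul_left)
      exact base.congr (Filter.Eventually.of_forall fun x => by simp only [hfe])
    have parts : ∀ i, ∫ x, (χ n x * u x) * D2 i x
        = - ∫ x, (χ n x * D1 i x + u x * fderiv ℝ (χ n) x (e i)) * D1 i x := by
      intro i
      have hgood := integral_mul_fderiv_eq_neg_fderiv_mul_of_integrable
        (f := fun x => χ n x * u x) (g := D1 i) (v := e i)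
        (int5 i) (int1 i) (int4 i) (fun x _ => hpd x) (fun x _ => hD1diff i x)
      simp only [hfe] at hgood
      exact hgood
    calc ∫ x, χ n x * (u x * lapl u x)
        = ∑ i, ∫ x, (χ n x * u x) * D2 i x := by
          rw [← integral_finset_sum _ (fun i _ => int1 i)]
          apply integral_congr_ae
          apply Filter.Eventually.of_forall
          intro x
          simp only [hlapl, Finset.mul_sum]
          exact Finset.sum_congr rfl fun i _ => by ring
      _ = ∑ i, -∫ x, (χ n x * D1 i x + u x * fderiv ℝ (χ n) x (e i)) * D1 i x :=
          Finset.sum_congr rfl fun i _ => parts i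
      _ = ∑ i, -((∫ x, χ n x * (D1 i x)^2)
            + ∫ x, fderiv ℝ (χ n) x (e i) * (u x * D1 i x)) := by
          refine Finset.sum_congr rfl fun i _ => ?_
          congr 1
          rw [← integral_add (int2 i) (int3 i)]
          apply integral_congr_ae
          apply Filter.Eventually.of_forall
          intro x
          simp only []
          ring
      _ = - (∑ i, ∫ x, χ n x * (D1 i x)^2)
          - ∑ i, ∫ x, fderiv ℝ (χ n) x (e i) * (u x * D1 i x) := by
          simp only [neg_add, Finset.sum_add_distrib, Finset.sum_neg_distrib]
          ring
      _ = - (∫ x, χ n x * ∑ i, (D1 i x)^2)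
          - ∫ x, ∑ i, fderiv ℝ (χ n) x (e i) * (u x * D1 i x) := by
          rw [← integral_finset_sum _ (fun i _ => int2 i),
            ← integral_finset_sum _ (fun i _ => int3 i)]
          have h2 : ∫ x, ∑ i, χ n x * (D1 i x)^2 = ∫ x, χ n x * ∑ i, (D1 i x)^2 := by
            apply integral_congr_ae
            apply Filter.Eventually.of_forall
            intro x
            simp only [Finset.mul_sum]
          rw [h2]
  -- pointwise limits and domination
  have hev1 : ∀ x : EuclideanSpace ℝ (Fin d), ∀ᶠ n : ℕ in atTop, χ n x = 1 := by
    intro x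
    filter_upwards [eventually_ge_atTop ⌈‖x‖⌉₊] with n hn
    apply hχ1 n x
    calc ‖x‖ ≤ (⌈‖x‖⌉₊ : ℝ) := Nat.le_ceil _
      _ ≤ (n:ℝ) := by exact_mod_cast hn
      _ ≤ (n:ℝ)+1 := by linarith
  have hev2 : ∀ x : EuclideanSpace ℝ (Fin d), ∀ᶠ n : ℕ in atTop,
      fderiv ℝ (χ n) x = 0 := by
    intro x
    filter_upwards [eventually_ge_atTop ⌈‖x‖⌉₊] with n hn
    apply hχd0 n x
    calc ‖x‖ ≤ (⌈‖x‖⌉₊ : ℝ) := Nat.le_ceil _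
      _ ≤ (n:ℝ) := by exact_mod_cast hn
      _ < (n:ℝ)+1 := by linarith
  have lim1 : Tendsto (fun n => ∫ x, χ n x * (u x * lapl u x)) atTop
      (nhds (∫ x, u x * lapl u x)) := by
    apply tendsto_integral_of_dominated_convergence
      (bound := fun x => (u x)^2 + (lapl u x)^2)
    · intro n
      exact ((hχcont n).mul (hucont.mul hlaplcont)).aestronglyMeasurable
    · exact hL2.add hLap
    · intro n
      apply Filter.Eventually.of_forall
      intro x
      rw [Real.norm_eq_abs, abs_mul]
      have h1 : |χ n x| ≤ 1 := by rw [abs_of_nonneg (hχ0 n x)]; exact hχle1 n x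
      have h2 : |u x * lapl u x| ≤ (u x)^2 + (lapl u x)^2 := by
        rw [abs_mul]
        nlinarith [sq_abs (u x), sq_abs (lapl u x), sq_nonneg (|u x| - |lapl u x|),
          abs_nonneg (u x), abs_nonneg (lapl u x)]
      nlinarith [abs_nonneg (u x * lapl u x), abs_mul (u x) (lapl u x),
        abs_nonneg (χ n x)]
    · apply Filter.Eventually.of_forall
      intro x
      have hev : (fun n : ℕ => χ n x * (u x * lapl u x)) =ᶠ[atTop]
          (fun _ => u x * lapl u x) := by
        filter_upwards [hev1 x] with n hn
        rw [hn, one_mul]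
      exact Tendsto.congr' hev.symm tendsto_const_nhds
  have lim2 : Tendsto (fun n => ∫ x, χ n x * ∑ i, (D1 i x)^2) atTop
      (nhds (∫ x, ∑ i, (D1 i x)^2)) := by
    apply tendsto_integral_of_dominated_convergence
      (bound := fun x => ‖fderiv ℝ u x‖^2)
    · intro n
      exact ((hχcont n).mul
        (continuous_finset_sum _ fun i _ => (hD1cont i).pow 2)).aestronglyMeasurable
    · exact hG
    · intro n
      apply Filter.Eventually.of_forall
      intro x
      have hsum : ∑ i, (D1 i x)^2 = ‖fderiv ℝ u x‖^2 := (opnorm_sq_eq _).symm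
      have hnn : 0 ≤ ∑ i, (D1 i x)^2 := Finset.sum_nonneg fun i _ => sq_nonneg _
      rw [Real.norm_eq_abs, abs_mul, abs_of_nonneg hnn, ← hsum]
      have h1 : |χ n x| ≤ 1 := by rw [abs_of_nonneg (hχ0 n x)]; exact hχle1 n x
      nlinarith [abs_nonneg (χ n x)]
    · apply Filter.Eventually.of_forall
      intro x
      have hev : (fun n : ℕ => χ n x * ∑ i, (D1 i x)^2) =ᶠ[atTop]
          (fun _ => ∑ i, (D1 i x)^2) := by
        filter_upwards [hev1 x] with n hn
        rw [hn, one_mul]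
      exact Tendsto.congr' hev.symm tendsto_const_nhds
  have lim3 : Tendsto (fun n => ∫ x, ∑ i, fderiv ℝ (χ n) x (e i) * (u x * D1 i x)) atTop
      (nhds 0) := by
    have h0 : (0:ℝ) = ∫ _x : EuclideanSpace ℝ (Fin d), (0:ℝ) := by simp
    rw [h0]
    apply tendsto_integral_of_dominated_convergence
      (bound := fun x => (d:ℝ) * M * ((u x)^2 + ‖fderiv ℝ u x‖^2))
    · intro n
      exact (continuous_finset_sum _ fun i _ =>
        (hχdicont n i).mul (hucont.mul (hD1cont i))).aestronglyMeasurable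
    · exact (hL2.add hG).const_mul _
    · intro n
      apply Filter.Eventually.of_forall
      intro x
      rw [Real.norm_eq_abs]
      calc |∑ i, fderiv ℝ (χ n) x (e i) * (u x * D1 i x)|
          ≤ ∑ i, |fderiv ℝ (χ n) x (e i) * (u x * D1 i x)| :=
            Finset.abs_sum_le_sum_abs _ _
        _ ≤ ∑ _i : Fin d, M * ((u x)^2 + ‖fderiv ℝ u x‖^2) := by
            refine Finset.sum_le_sum fun i _ => ?_
            rw [abs_mul, abs_mul]
            have h1 : |fderiv ℝ (χ n) x (e i)| ≤ M := hχdb n x i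
            have h2 : |D1 i x| ≤ ‖fderiv ℝ u x‖ := hD1le i x
            have h3 : |u x| * |D1 i x| ≤ (u x)^2 + ‖fderiv ℝ u x‖^2 := by
              nlinarith [sq_abs (u x), abs_nonneg (u x), abs_nonneg (D1 i x),
                norm_nonneg (fderiv ℝ u x), sq_nonneg (|u x| - ‖fderiv ℝ u x‖)]
            have h4 : (0:ℝ) ≤ |u x| * |D1 i x| := by positivity
            nlinarith [abs_nonneg (fderiv ℝ (χ n) x (e i))]
        _ = (d:ℝ) * M * ((u x)^2 + ‖fderiv ℝ u x‖^2) := by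
            rw [Finset.sum_const, Finset.card_univ, Fintype.card_fin]
            simp [mul_assoc]
    · apply Filter.Eventually.of_forall
      intro x
      have hev : (fun n : ℕ => ∑ i, fderiv ℝ (χ n) x (e i) * (u x * D1 i x)) =ᶠ[atTop]
          (fun _ => (0:ℝ)) := by
        filter_upwards [hev2 x] with n hn
        apply Finset.sum_eq_zero
        intro i _
        rw [hn]
        simp
      exact Tendsto.congr' hev.symm tendsto_const_nhds
  have limR : Tendsto (fun n => ∫ x, χ n x * (u x * lapl u x)) atTop
      (nhds (- (∫ x, ∑ i, (D1 i x)^2) - 0)) := by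
    have : (fun n => ∫ x, χ n x * (u x * lapl u x))
        = fun n => - (∫ x, χ n x * ∑ i, (D1 i x)^2)
          - ∫ x, ∑ i, fderiv ℝ (χ n) x (e i) * (u x * D1 i x) := funext key
    rw [this]
    exact Tendsto.sub (Tendsto.neg lim2) lim3
  have huniq := tendsto_nhds_unique lim1 limR
  have hfin : ∫ x, ∑ i, (D1 i x)^2 = ∫ x, ‖fderiv ℝ u x‖^2 := by
    apply integral_congr_ae
    apply Filter.Eventually.of_forall
    intro x
    exact (opnorm_sq_eq _).symm
  rw [huniq, hfin]
  ring


/-- vanishing of the Lagrange multiplier. -/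
theorem lagrange_multiplier_vanishes {d : ℕ} (hd : 1 ≤ d) (σ ω lam : ℝ) (hσ : 0 < σ)
    (u : EuclideanSpace ℝ (Fin d) → ℝ) (hC2 : ContDiff ℝ 2 u)
    (hL2 : Integrable (fun x => (u x) ^ 2))
    (hG : Integrable (fun x => ‖fderiv ℝ u x‖ ^ 2))
    (hLap : Integrable (fun x => (lapl u x) ^ 2))
    (hI : Integrable (fun x => |u x| ^ (2 * σ + 2)))
    (hIpos : 0 < ∫ x, |u x| ^ (2 * σ + 2))
    (hMpos : 0 < ∫ x, (u x) ^ 2)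
    (heq : ∀ x, -lapl u x + ω * u x - muR d σ ω u * |u x| ^ (2 * σ) * u x -
      (lam / 4) * (∫ y, |u y| ^ (2 * σ + 2)) ^ (1 / (σ + 1)) * u x = 0) :
    lam = 0 := by
  set I : ℝ := ∫ x, |u x| ^ (2 * σ + 2) with hIdef
  set Mv : ℝ := ∫ x, (u x) ^ 2 with hMdef
  set Gv : ℝ := ∫ x, ‖fderiv ℝ u x‖ ^ 2 with hGdef
  set μ0 : ℝ := muR d σ ω u with hμdef
  set cc : ℝ := lam / 4 * I ^ (1 / (σ + 1)) with hccdef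
  have hlapl_eq : ∀ x, lapl u x
      = ω * u x - μ0 * |u x| ^ (2 * σ) * u x - cc * u x := by
    intro x
    have h := heq x
    linarith
  have hpt : ∀ x, u x * lapl u x
      = ω * (u x) ^ 2 - μ0 * |u x| ^ (2 * σ + 2) - cc * (u x) ^ 2 := by
    intro x
    rw [hlapl_eq x]
    have habs : |u x| ^ (2 * σ + 2) = |u x| ^ (2 * σ) * (u x) ^ 2 := by
      rw [Real.rpow_add' (abs_nonneg _) (by positivity : 2 * σ + 2 ≠ 0)]
      congr 1
      rw [show ((2:ℝ)) = ((2:ℕ):ℝ) by norm_num, Real.rpow_natCast, sq_abs]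
    rw [habs]
    ring
  have hPval : ∫ x, u x * lapl u x = ω * Mv - μ0 * I - cc * Mv := by
    have hfe : (fun x => u x * lapl u x)
        = fun x => ω * (u x) ^ 2 - μ0 * |u x| ^ (2 * σ + 2) - cc * (u x) ^ 2 := funext hpt
    have i1 : Integrable (fun x => ω * (u x) ^ 2 - μ0 * |u x| ^ (2 * σ + 2)) :=
      (hL2.const_mul ω).sub (hI.const_mul μ0)
    rw [hfe, integral_sub i1 (hL2.const_mul cc),
      integral_sub (hL2.const_mul ω) (hI.const_mul μ0),
      integral_const_mul, integral_const_mul, integral_const_mul]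
  have hkey : ∫ x, u x * lapl u x = -Gv := integral_mul_lapl u hC2 hL2 hG hLap
  have hμI : μ0 * I = Gv + ω * Mv := by
    have hform : μ0 = (Gv + ω * Mv) / I := rfl
    rw [hform, div_mul_cancel₀ _ (ne_of_gt hIpos)]
  have hccM : cc * Mv = 0 := by
    have := hPval.symm.trans hkey
    nlinarith [hμI]
  have hcc0 : cc = 0 := by
    rcases mul_eq_zero.1 hccM with h | h
    · exact h
    · exact absurd h (ne_of_gt hMpos)
  have hIpow : 0 < I ^ (1 / (σ + 1)) := Real.rpow_pos_of_pos hIpos _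
  rw [hccdef] at hcc0
  rcases mul_eq_zero.1 hcc0 with h | h
  · linarith
  · exact absurd h (ne_of_gt hIpow)
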